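/- For every r ∈ F_n, the face F(r) of GZ(λ) is a nonempty compact convex polytope whose affine hull has dimension n-1, and F(r) has exactly 2^{n-1} extreme points. -/

import Mathlib

open MeasureTheory

/-- Off-diagonal positions `(i,j)` with `1 ≤ i < j ≤ n` (1-indexed, encoded in `Fin (n+1)`). -/
abbrev GZpos (n : ℕ) := {p : Fin (n + 1) × Fin (n + 1) // 0 < (p.1 : ℕ) ∧ (p.1 : ℕ) < (p.2 : ℕ)}

/-- The entry `x_{i,j}` of the extended Gelfand–Zetlin array, with the convention
`x_{i,i} = λ_i`. -/
def entry (n : ℕ) (lam : ℕ → ℝ) (x : GZpos n → ℝ) (i j : ℕ) : ℝ :=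
  if h : 0 < i ∧ i < j ∧ j ≤ n then
    x ⟨(⟨i, by omega⟩, ⟨j, by omega⟩), ⟨h.1, h.2.1⟩⟩
  else lam i

/-- The Gelfand–Zetlin polytope `GZ(λ)` in `ℝ^{n(n-1)/2}`. -/
def GZ (n : ℕ) (lam : ℕ → ℝ) : Set (GZpos n → ℝ) :=
  {x | ∀ i j : ℕ, 0 < i → i ≤ j → j + 1 ≤ n →
    entry n lam x i (j + 1) ≤ entry n lam x i j ∧
    entry n lam x (i + 1) (j + 1) ≤ entry n lam x i (j + 1)}

/-- The index set `F_n = {r = (r_1,…,r_{n-1}) : 1 ≤ r_j ≤ n-j}`, encoded as functions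
`ℕ → ℕ` vanishing outside `{1,…,n-1}`. -/
def calF (n : ℕ) : Set (ℕ → ℕ) :=
  {r | (∀ j, 1 ≤ j → j ≤ n - 1 → 1 ≤ r j ∧ r j ≤ n - j) ∧
       ∀ j, j = 0 ∨ n - 1 < j → r j = 0}

/-- The face `F(r)` of `GZ(λ)`, defined by the equalities `x_{i,j+i} = x_{i,j+i-1}` for
`1 ≤ i < r_j` and `x_{i,j+i} = x_{i+1,j+i}` for `r_j < i ≤ n-j`, for each `1 ≤ j ≤ n-1`. -/
def Fface (n : ℕ) (lam : ℕ → ℝ) (r : ℕ → ℕ) : Set (GZpos n → ℝ) :=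
  {x ∈ GZ n lam | ∀ j, 1 ≤ j → j ≤ n - 1 →
    (∀ i, 1 ≤ i → i < r j → entry n lam x i (j + i) = entry n lam x i (j + i - 1)) ∧
    (∀ i, r j < i → i ≤ n - j → entry n lam x i (j + i) = entry n lam x (i + 1) (j + i))}

/-- `y_k = ∑_{i=1}^{n-k} x_{i,i+k}`. -/
def yco (n : ℕ) (lam : ℕ → ℝ) (x : GZpos n → ℝ) (k : ℕ) : ℝ :=
  ∑ i ∈ Finset.Icc 1 (n - k), entry n lam x i (i + k)

/-- The map `Φ((x_{i,j})) = (y_0 - y_1, y_1 - y_2, …, y_{n-2} - y_{n-1}, y_{n-1})`. -/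
def Phi (n : ℕ) (lam : ℕ → ℝ) (x : GZpos n → ℝ) : Fin n → ℝ :=
  fun m => if (m : ℕ) = n - 1 then yco n lam x (n - 1)
           else yco n lam x (m : ℕ) - yco n lam x ((m : ℕ) + 1)

/-- The permutohedron `Perm(λ) ⊆ ℝ^n`: the convex hull of the points
`(λ_{σ(1)}, …, λ_{σ(n)})` for `σ ∈ S_n`. -/
def PermP (n : ℕ) (lam : ℕ → ℝ) : Set (Fin n → ℝ) :=
  convexHull ℝ {v | ∃ σ : Equiv.Perm (Fin n), v = fun i => lam ((σ i : ℕ) + 1)}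


namespace GZdev

/-- selector: which value (lam-index or free coordinate) sits at row `i`, diagonal `d`. -/
def sel (r : ℕ → ℕ) : ℕ → ℕ → ℕ ⊕ ℕ
  | i, 0 => .inl i
  | i, d+1 => if i < r (d+1) then sel r i d else if i = r (d+1) then .inr (d+1) else sel r (i+1) d

/-- Entry at row `i`, diagonal `d` of the array determined by free coordinates `t`. -/
def ent (lam : ℕ → ℝ) (r : ℕ → ℕ) (t : ℕ → ℝ) (i d : ℕ) : ℝ :=
  Sum.elim lam t (sel r i d)

lemma sel_zero (r : ℕ → ℕ) (i : ℕ) : sel r i 0 = .inl i := rfl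

lemma sel_succ_lt (r : ℕ → ℕ) {i d : ℕ} (h : i < r (d+1)) : sel r i (d+1) = sel r i d := by
  simp [sel, h]

lemma sel_succ_eq (r : ℕ → ℕ) (d : ℕ) : sel r (r (d+1)) (d+1) = .inr (d+1) := by
  simp [sel]

lemma sel_succ_gt (r : ℕ → ℕ) {i d : ℕ} (h : r (d+1) < i) : sel r i (d+1) = sel r (i+1) d := by
  have h1 : ¬ i < r (d+1) := by omega
  have h2 : ¬ i = r (d+1) := by omega
  simp [sel, h1, h2]

lemma sel_inr_le (r : ℕ → ℕ) {i d k : ℕ} (h : sel r i d = .inr k) : 1 ≤ k ∧ k ≤ d := by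
  induction d generalizing i with
  | zero => simp [sel] at h
  | succ d ih =>
    rcases lt_trichotomy i (r (d+1)) with hc | hc | hc
    · rw [sel_succ_lt r hc] at h; have := ih h; omega
    · rw [hc, sel_succ_eq] at h; cases h; omega
    · rw [sel_succ_gt r hc] at h; have := ih h; omega

lemma ent_zero (lam : ℕ → ℝ) (r : ℕ → ℕ) (t : ℕ → ℝ) (i : ℕ) : ent lam r t i 0 = lam i := rfl

lemma ent_succ_lt (lam : ℕ → ℝ) (r : ℕ → ℕ) (t : ℕ → ℝ) {i d : ℕ} (h : i < r (d+1)) :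
    ent lam r t i (d+1) = ent lam r t i d := by unfold ent; rw [sel_succ_lt r h]

lemma ent_succ_eq (lam : ℕ → ℝ) (r : ℕ → ℕ) (t : ℕ → ℝ) (d : ℕ) :
    ent lam r t (r (d+1)) (d+1) = t (d+1) := by unfold ent; rw [sel_succ_eq]; rfl

lemma ent_succ_gt (lam : ℕ → ℝ) (r : ℕ → ℕ) (t : ℕ → ℝ) {i d : ℕ} (h : r (d+1) < i) :
    ent lam r t i (d+1) = ent lam r t (i+1) d := by unfold ent; rw [sel_succ_gt r h]

lemma ent_congr (lam : ℕ → ℝ) (r : ℕ → ℕ) {t t' : ℕ → ℝ} {d : ℕ}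
    (h : ∀ k, 1 ≤ k → k ≤ d → t k = t' k) (i : ℕ) : ent lam r t i d = ent lam r t' i d := by
  unfold ent
  cases hs : sel r i d with
  | inl m => rfl
  | inr k => have := sel_inr_le r hs; simpa using h k this.1 this.2

lemma ent_affine (lam : ℕ → ℝ) (r : ℕ → ℕ) (t t' : ℕ → ℝ) {a b : ℝ} (hab : a + b = 1)
    (i d : ℕ) : ent lam r (a • t + b • t') i d = a * ent lam r t i d + b * ent lam r t' i d := by
  unfold ent
  cases hs : sel r i d with
  | inl m => simp; rw [← add_mul, hab, one_mul]
  | inr k => simp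

/-- monotone perturbation bound -/
lemma ent_perturb (lam : ℕ → ℝ) (r : ℕ → ℕ) {t u : ℕ → ℝ} {δ : ℝ}
    (h : ∀ k, t k ≤ u k ∧ u k ≤ t k + δ) (hδ : 0 ≤ δ) (i d : ℕ) :
    ent lam r t i d ≤ ent lam r u i d ∧ ent lam r u i d ≤ ent lam r t i d + δ := by
  unfold ent
  cases hs : sel r i d with
  | inl m => simpa using hδ
  | inr k => simpa using h k

/-- The parameter polytope up to level `m`. -/
def Pm (n : ℕ) (lam : ℕ → ℝ) (r : ℕ → ℕ) (m : ℕ) : Set (ℕ → ℝ) :=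
  {t | (∀ d, ¬(1 ≤ d ∧ d ≤ m) → t d = 0) ∧
    ∀ d, 1 ≤ d → d ≤ m →
      ent lam r t (r d + 1) (d-1) ≤ t d ∧ t d ≤ ent lam r t (r d) (d-1)}

/-- strict decrease along each diagonal. -/
lemma ent_strict {n : ℕ} {lam : ℕ → ℝ} {r : ℕ → ℕ}
    (hlam : ∀ i, 1 ≤ i → i < n → lam (i + 1) < lam i)
    (hr : ∀ j, 1 ≤ j → j ≤ n - 1 → 1 ≤ r j ∧ r j ≤ n - j)
    {m : ℕ} (hm : m ≤ n - 1) {t : ℕ → ℝ}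
    (ht : ∀ d, 1 ≤ d → d ≤ m → ent lam r t (r d + 1) (d-1) ≤ t d ∧ t d ≤ ent lam r t (r d) (d-1)) :
    ∀ d, d ≤ m → ∀ i, 1 ≤ i → i + 1 ≤ n - d → ent lam r t (i+1) d < ent lam r t i d := by
  intro d
  induction d with
  | zero =>
    intro _ i h1 h2
    rw [ent_zero, ent_zero]
    exact hlam i h1 (by omega)
  | succ d ih =>
    intro hdm i h1 h2
    have hd : d ≤ m := by omega
    have hrd := hr (d+1) (by omega) (by omega)
    have hcon := ht (d+1) (by omega) hdm
    rw [show d + 1 - 1 = d from rfl] at hcon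
    rcases lt_trichotomy (i+1) (r (d+1)) with hc | hc | hc
    · rw [ent_succ_lt lam r t hc, ent_succ_lt lam r t (by omega)]
      exact ih hd i h1 (by omega)
    · -- i + 1 = r (d+1)
      have e1 : ent lam r t (i+1) (d+1) = t (d+1) := by rw [hc]; exact ent_succ_eq lam r t d
      rw [e1, ent_succ_lt lam r t (by omega)]
      calc t (d+1) ≤ ent lam r t (r (d+1)) d := hcon.2
        _ = ent lam r t (i+1) d := by rw [hc]
        _ < ent lam r t i d := ih hd i h1 (by omega)
    · rcases Nat.lt_or_ge (r (d+1)) i with hc2 | hc2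
      · rw [ent_succ_gt lam r t hc, ent_succ_gt lam r t hc2]
        exact ih hd (i+1) (by omega) (by omega)
      · -- i = r (d+1)
        have hi : i = r (d+1) := by omega
        have e1 : ent lam r t i (d+1) = t (d+1) := by rw [hi]; exact ent_succ_eq lam r t d
        rw [ent_succ_gt lam r t hc, e1]
        calc ent lam r t (i+1+1) d < ent lam r t (i+1) d := ih hd (i+1) (by omega) (by omega)
          _ = ent lam r t (r (d+1) + 1) d := by rw [hi]
          _ ≤ t (d+1) := hcon.1

/-- bounds: `lam (i+d) ≤ ent i d ≤ lam i`. -/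
lemma ent_bounds {n : ℕ} {lam : ℕ → ℝ} {r : ℕ → ℕ}
    (hlam : ∀ i, 1 ≤ i → i < n → lam (i + 1) < lam i)
    (hr : ∀ j, 1 ≤ j → j ≤ n - 1 → 1 ≤ r j ∧ r j ≤ n - j)
    {m : ℕ} (hm : m ≤ n - 1) {t : ℕ → ℝ}
    (ht : ∀ d, 1 ≤ d → d ≤ m → ent lam r t (r d + 1) (d-1) ≤ t d ∧ t d ≤ ent lam r t (r d) (d-1)) :
    ∀ d, d ≤ m → ∀ i, 1 ≤ i → i ≤ n - d →
      lam (i+d) ≤ ent lam r t i d ∧ ent lam r t i d ≤ lam i := by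
  intro d
  induction d with
  | zero => intro _ i _ _; rw [ent_zero]; exact ⟨le_refl _, le_refl _⟩
  | succ d ih =>
    intro hdm i h1 h2
    have hd : d ≤ m := by omega
    have hrd := hr (d+1) (by omega) (by omega)
    have hcon := ht (d+1) (by omega) hdm
    rw [show d + 1 - 1 = d from rfl] at hcon
    rcases lt_trichotomy i (r (d+1)) with hc | hc | hc
    · rw [ent_succ_lt lam r t hc]
      have hb := ih hd i h1 (by omega)
      constructor
      · calc lam (i+(d+1)) ≤ lam (i+d) := le_of_lt (hlam (i+d) (by omega) (by omega))
          _ ≤ ent lam r t i d := hb.1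
      · exact hb.2
    · have e1 : ent lam r t i (d+1) = t (d+1) := by rw [hc]; exact ent_succ_eq lam r t d
      rw [e1]
      have hb1 := ih hd (r (d+1) + 1) (by omega) (by omega)
      have hb2 := ih hd (r (d+1)) (by omega) (by omega)
      constructor
      · calc lam (i+(d+1)) = lam (r (d+1) + 1 + d) := by rw [hc]; ring_nf
          _ ≤ ent lam r t (r (d+1) + 1) d := hb1.1
          _ ≤ t (d+1) := hcon.1
      · calc t (d+1) ≤ ent lam r t (r (d+1)) d := hcon.2
          _ ≤ lam (r (d+1)) := hb2.2
          _ = lam i := by rw [hc]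
    · rw [ent_succ_gt lam r t hc]
      have hb := ih hd (i+1) (by omega) (by omega)
      constructor
      · calc lam (i+(d+1)) = lam (i+1+d) := by ring_nf
          _ ≤ ent lam r t (i+1) d := hb.1
      · calc ent lam r t (i+1) d ≤ lam (i+1) := hb.2
          _ ≤ lam i := le_of_lt (hlam i h1 (by omega))

/-- interlacing: `ent (i+1) d ≤ ent i (d+1) ≤ ent i d`. -/
lemma ent_step {n : ℕ} {lam : ℕ → ℝ} {r : ℕ → ℕ}
    (hlam : ∀ i, 1 ≤ i → i < n → lam (i + 1) < lam i)
    (hr : ∀ j, 1 ≤ j → j ≤ n - 1 → 1 ≤ r j ∧ r j ≤ n - j)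
    {m : ℕ} (hm : m ≤ n - 1) {t : ℕ → ℝ}
    (ht : ∀ d, 1 ≤ d → d ≤ m → ent lam r t (r d + 1) (d-1) ≤ t d ∧ t d ≤ ent lam r t (r d) (d-1)) :
    ∀ d, d + 1 ≤ m → ∀ i, 1 ≤ i → i ≤ n - (d+1) →
      ent lam r t i (d+1) ≤ ent lam r t i d ∧ ent lam r t (i+1) d ≤ ent lam r t i (d+1) := by
  intro d hdm i h1 h2
  have hstrict := ent_strict hlam hr hm ht d (by omega)
  have hcon := ht (d+1) (by omega) hdm
  rw [show d + 1 - 1 = d from rfl] at hcon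
  rcases lt_trichotomy i (r (d+1)) with hc | hc | hc
  · rw [ent_succ_lt lam r t hc]
    exact ⟨le_refl _, le_of_lt (hstrict i h1 (by omega))⟩
  · have e1 : ent lam r t i (d+1) = t (d+1) := by rw [hc]; exact ent_succ_eq lam r t d
    rw [e1, hc]
    exact ⟨hcon.2, hcon.1⟩
  · rw [ent_succ_gt lam r t hc]
    exact ⟨le_of_lt (hstrict i h1 (by omega)), le_refl _⟩

/-- The parametrization map from `t`-space to the GZ array space. -/
def Psi (n : ℕ) (lam : ℕ → ℝ) (r : ℕ → ℕ) (t : ℕ → ℝ) : GZpos n → ℝ :=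
  fun p => Sum.elim lam t (sel r ((p.1.1 : ℕ)) ((p.1.2 : ℕ) - (p.1.1 : ℕ)))

lemma entry_Psi {n : ℕ} (lam : ℕ → ℝ) (r : ℕ → ℕ) (t : ℕ → ℝ) {i j : ℕ}
    (h0 : 0 < i) (hij : i ≤ j) (hj : j ≤ n) :
    entry n lam (Psi n lam r t) i j = ent lam r t i (j - i) := by
  rcases Nat.lt_or_ge i j with hlt | hge
  · rw [entry, dif_pos ⟨h0, hlt, hj⟩]; rfl
  · have hij' : i = j := by omega
    rw [entry, dif_neg (by omega)]
    rw [show j - i = 0 by omega, ent_zero]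

lemma entry_eq_coord {n : ℕ} (lam : ℕ → ℝ) (x : GZpos n → ℝ) (p : GZpos n) :
    entry n lam x (p.1.1 : ℕ) (p.1.2 : ℕ) = x p := by
  obtain ⟨⟨a, b⟩, ha, hab⟩ := p
  have hb : (b : ℕ) ≤ n := by omega
  rw [entry, dif_pos ⟨ha, hab, hb⟩]

lemma face_eq {n : ℕ} {lam : ℕ → ℝ} {r : ℕ → ℕ} (hn : 2 ≤ n)
    (hlam : ∀ i, 1 ≤ i → i < n → lam (i + 1) < lam i)
    (hr : ∀ j, 1 ≤ j → j ≤ n - 1 → 1 ≤ r j ∧ r j ≤ n - j) :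
    Fface n lam r = Psi n lam r '' Pm n lam r (n-1) := by
  apply Set.Subset.antisymm
  · -- Fface ⊆ image
    intro x hx
    set t : ℕ → ℝ := fun d => if 1 ≤ d ∧ d ≤ n-1 then entry n lam x (r d) (r d + d) else 0 with htdef
    have claim : ∀ d, d ≤ n-1 → ∀ i, 1 ≤ i → i ≤ n - d →
        entry n lam x i (i+d) = ent lam r t i d := by
      intro d
      induction d with
      | zero =>
        intro _ i h1 _
        rw [ent_zero, entry, dif_neg (by omega)]
      | succ d ih =>
        intro hdn i h1 h2
        have hrd := hr (d+1) (by omega) (by omega)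
        have hface := hx.2 (d+1) (by omega) (by omega)
        rcases lt_trichotomy i (r (d+1)) with hc | hc | hc
        · have he := hface.1 i h1 hc
          rw [show (d+1) + i - 1 = i + d by omega, show (d+1) + i = i + (d+1) by omega] at he
          rw [he, ih (by omega) i h1 (by omega), ent_succ_lt lam r t hc]
        · have e1 : ent lam r t i (d+1) = t (d+1) := by rw [hc]; exact ent_succ_eq lam r t d
          have e2 : t (d+1) = entry n lam x (r (d+1)) (r (d+1) + (d+1)) := by
            simp only [htdef]
            rw [if_pos (⟨by omega, by omega⟩ : 1 ≤ d+1 ∧ d+1 ≤ n-1)]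
          rw [e1, e2, hc]
        · have he := hface.2 i hc (by omega)
          rw [show (d+1) + i = i + (d+1) by omega] at he
          rw [he, show i + (d+1) = (i+1) + d by omega,
            ih (by omega) (i+1) (by omega) (by omega), ent_succ_gt lam r t hc]
    refine ⟨t, ⟨?_, ?_⟩, ?_⟩
    · intro d hd
      rw [htdef]
      simp only [if_neg hd]
    · intro d hd1 hd2
      have hrd := hr d hd1 hd2
      have hGZ := hx.1 (r d) (r d + d - 1) (by omega) (by omega) (by omega)
      have e0 : r d + d - 1 + 1 = r d + d := by omega
      rw [e0] at hGZ
      have e1 : entry n lam x (r d) (r d + d) = t d := by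
        rw [htdef]; simp only [if_pos (⟨hd1, hd2⟩ : 1 ≤ d ∧ d ≤ n-1)]
      have e2 : entry n lam x (r d) (r d + d - 1) = ent lam r t (r d) (d-1) := by
        rw [show r d + d - 1 = r d + (d-1) by omega]
        exact claim (d-1) (by omega) (r d) (by omega) (by omega)
      have e3 : entry n lam x (r d + 1) (r d + d) = ent lam r t (r d + 1) (d-1) := by
        rw [show r d + d = (r d + 1) + (d-1) by omega]
        exact claim (d-1) (by omega) (r d + 1) (by omega) (by omega)
      rw [e1, e2] at hGZ
      rw [e3] at hGZ
      exact ⟨hGZ.2, hGZ.1⟩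
    · funext p
      obtain ⟨⟨a, b⟩, ha, hab⟩ := p
      have ha' : 0 < (a : ℕ) := ha
      have hab' : (a : ℕ) < (b : ℕ) := hab
      have hb : (b : ℕ) ≤ n := by omega
      have key := claim ((b:ℕ) - (a:ℕ)) (by omega) (a:ℕ) (by omega) (by omega)
      rw [show (a:ℕ) + ((b:ℕ) - (a:ℕ)) = (b:ℕ) by omega] at key
      have hco : entry n lam x (a:ℕ) (b:ℕ) = x ⟨(a, b), ha, hab⟩ :=
        entry_eq_coord lam x ⟨(a, b), ha, hab⟩
      rw [← hco, key]
      rfl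
  · -- image ⊆ Fface
    rintro x ⟨t, ht, rfl⟩
    have hstep := ent_step hlam hr (le_refl (n-1)) ht.2
    constructor
    · -- GZ membership
      intro i j h0 hij hj1
      have e1 : entry n lam (Psi n lam r t) i (j+1) = ent lam r t i ((j-i)+1) := by
        rw [entry_Psi lam r t h0 (by omega) (by omega)]
        congr 1
        omega
      have e2 : entry n lam (Psi n lam r t) i j = ent lam r t i (j-i) :=
        entry_Psi lam r t h0 hij (by omega)
      have e3 : entry n lam (Psi n lam r t) (i+1) (j+1) = ent lam r t (i+1) (j-i) := by
        rw [entry_Psi lam r t (by omega) (by omega) (by omega)]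
        congr 1
        omega
      rw [e1, e2, e3]
      have := hstep (j-i) (by omega) i (by omega) (by omega)
      exact ⟨this.1, this.2⟩
    · -- face equalities
      intro j hj1 hjn
      obtain ⟨k, rfl⟩ : ∃ k, j = k + 1 := ⟨j - 1, by omega⟩
      have hrj := hr (k+1) hj1 hjn
      constructor
      · intro i hi1 hir
        have e1 : entry n lam (Psi n lam r t) i ((k+1)+i) = ent lam r t i (k+1) := by
          rw [entry_Psi lam r t (by omega) (by omega) (by omega)]
          congr 1
          omega
        have e2 : entry n lam (Psi n lam r t) i ((k+1)+i-1) = ent lam r t i k := by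
          rw [entry_Psi lam r t (by omega) (by omega) (by omega)]
          congr 1
          omega
        rw [e1, e2, ent_succ_lt lam r t hir]
      · intro i hir hin
        have e1 : entry n lam (Psi n lam r t) i ((k+1)+i) = ent lam r t i (k+1) := by
          rw [entry_Psi lam r t (by omega) (by omega) (by omega)]
          congr 1
          omega
        have e2 : entry n lam (Psi n lam r t) (i+1) ((k+1)+i) = ent lam r t (i+1) k := by
          rw [entry_Psi lam r t (by omega) (by omega) (by omega)]
          congr 1
          omega
        rw [e1, e2, ent_succ_gt lam r t hir]

lemma ent_update_high {lam : ℕ → ℝ} {r : ℕ → ℕ} {m d : ℕ} (hd : d ≤ m) (t : ℕ → ℝ) (v : ℝ)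
    (i : ℕ) : ent lam r (Function.update t (m+1) v) i d = ent lam r t i d :=
  ent_congr lam r (fun k _ hk2 => Function.update_of_ne (by omega) _ _) i

lemma Pm_zero {n : ℕ} {lam : ℕ → ℝ} {r : ℕ → ℕ} : Pm n lam r 0 = {0} := by
  ext t
  constructor
  · intro ht
    funext k
    exact ht.1 k (by omega)
  · rintro rfl
    exact ⟨fun d _ => rfl, fun d h1 h2 => by omega⟩

lemma mem_Pm_succ {n : ℕ} {lam : ℕ → ℝ} {r : ℕ → ℕ} {m : ℕ} {t : ℕ → ℝ} :
    t ∈ Pm n lam r (m+1) ↔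
      (Function.update t (m+1) 0 ∈ Pm n lam r m ∧
        ent lam r t (r (m+1) + 1) m ≤ t (m+1) ∧ t (m+1) ≤ ent lam r t (r (m+1)) m) := by
  constructor
  · intro ht
    refine ⟨⟨?_, ?_⟩, ?_⟩
    · intro d hd
      by_cases hdm : d = m+1
      · rw [hdm]; exact Function.update_self _ _ _
      · rw [Function.update_of_ne hdm]; exact ht.1 d (by omega)
    · intro d h1 h2
      have h := ht.2 d h1 (by omega)
      rw [ent_update_high (by omega), ent_update_high (by omega),
        Function.update_of_ne (by omega)]
      exact h
    · exact ht.2 (m+1) (by omega) le_rfl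
  · rintro ⟨hu, hb1, hb2⟩
    constructor
    · intro d hd
      have h1 : Function.update t (m+1) 0 d = 0 := hu.1 d (by omega)
      rw [Function.update_of_ne (by omega)] at h1
      exact h1
    · intro d h1 h2
      by_cases hdm : d = m+1
      · subst hdm; exact ⟨hb1, hb2⟩
      · have h := hu.2 d h1 (by omega)
        rw [ent_update_high (by omega), ent_update_high (by omega),
          Function.update_of_ne (by omega)] at h
        exact h

lemma Pm_convex {n : ℕ} {lam : ℕ → ℝ} {r : ℕ → ℕ} {m : ℕ} : Convex ℝ (Pm n lam r m) := by
  intro t ht t' ht' a b ha hb hab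
  constructor
  · intro d hd
    have e : (a • t + b • t') d = a * t d + b * t' d := rfl
    rw [e, ht.1 d hd, ht'.1 d hd]
    ring
  · intro d h1 h2
    have e : (a • t + b • t') d = a * t d + b * t' d := rfl
    rw [e, ent_affine lam r t t' hab, ent_affine lam r t t' hab]
    have c1 := ht.2 d h1 h2
    have c2 := ht'.2 d h1 h2
    constructor
    · exact add_le_add (mul_le_mul_of_nonneg_left c1.1 ha) (mul_le_mul_of_nonneg_left c2.1 hb)
    · exact add_le_add (mul_le_mul_of_nonneg_left c1.2 ha) (mul_le_mul_of_nonneg_left c2.2 hb)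

lemma ent_free {lam : ℕ → ℝ} {r : ℕ → ℕ} (t : ℕ → ℝ) {d : ℕ} (hd : 1 ≤ d) :
    ent lam r t (r d) d = t d := by
  obtain ⟨e, rfl⟩ : ∃ e, d = e + 1 := ⟨d - 1, by omega⟩
  exact ent_succ_eq lam r t e

lemma Psi_affine {n : ℕ} (lam : ℕ → ℝ) (r : ℕ → ℕ) (t t' : ℕ → ℝ) {a b : ℝ} (hab : a + b = 1) :
    Psi n lam r (a • t + b • t') = a • Psi n lam r t + b • Psi n lam r t' := by
  funext p
  have e : Psi n lam r (a • t + b • t') p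
      = ent lam r (a • t + b • t') ((p.1.1 : ℕ)) ((p.1.2 : ℕ) - (p.1.1 : ℕ)) := rfl
  rw [e, ent_affine lam r t t' hab]
  rfl

lemma Psi_injOn {n : ℕ} {lam : ℕ → ℝ} {r : ℕ → ℕ}
    (hr : ∀ j, 1 ≤ j → j ≤ n - 1 → 1 ≤ r j ∧ r j ≤ n - j) :
    Set.InjOn (Psi n lam r) (Pm n lam r (n-1)) := by
  intro t ht t' ht' heq
  funext k
  by_cases hk : 1 ≤ k ∧ k ≤ n - 1
  · have hrk := hr k hk.1 hk.2
    have h := congrFun heq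
      ⟨(⟨r k, by omega⟩, ⟨r k + k, by omega⟩), ⟨hrk.1, Nat.lt_add_of_pos_right (by omega)⟩⟩
    have h' : ent lam r t (r k) (r k + k - r k) = ent lam r t' (r k) (r k + k - r k) := h
    rw [show r k + k - r k = k by omega] at h'
    rw [ent_free t hk.1, ent_free t' hk.1] at h'
    exact h'
  · rw [ht.1 k hk, ht'.1 k hk]

lemma extremePoints_Psi_image {n : ℕ} {lam : ℕ → ℝ} {r : ℕ → ℕ} {P : Set (ℕ → ℝ)}
    (hP : Convex ℝ P) (hinj : Set.InjOn (Psi n lam r) P) :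
    Set.extremePoints ℝ (Psi n lam r '' P) = Psi n lam r '' Set.extremePoints ℝ P := by
  apply Set.Subset.antisymm
  · intro y hy
    rw [mem_extremePoints] at hy
    obtain ⟨t, ht, rfl⟩ := hy.1
    refine ⟨t, ?_, rfl⟩
    rw [mem_extremePoints]
    refine ⟨ht, ?_⟩
    intro t1 h1 t2 h2 hseg
    obtain ⟨a, b, ha, hb, hab, heq⟩ := hseg
    have hseg' : Psi n lam r t ∈ openSegment ℝ (Psi n lam r t1) (Psi n lam r t2) :=
      ⟨a, b, ha, hb, hab, by rw [← Psi_affine lam r t1 t2 hab, heq]⟩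
    have := hy.2 (Psi n lam r t1) ⟨t1, h1, rfl⟩ (Psi n lam r t2) ⟨t2, h2, rfl⟩ hseg'
    exact ⟨hinj h1 ht this.1, hinj h2 ht this.2⟩
  · rintro y ⟨t, ht, rfl⟩
    rw [mem_extremePoints] at ht ⊢
    refine ⟨⟨t, ht.1, rfl⟩, ?_⟩
    rintro y1 ⟨t1, h1, rfl⟩ y2 ⟨t2, h2, rfl⟩ ⟨a, b, ha, hb, hab, heq⟩
    have hmem : a • t1 + b • t2 ∈ P := hP h1 h2 ha.le hb.le hab
    have heq2 : Psi n lam r (a • t1 + b • t2) = Psi n lam r t := by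
      rw [Psi_affine lam r t1 t2 hab, heq]
    have heq3 : a • t1 + b • t2 = t := hinj hmem ht.1 heq2
    have := ht.2 t1 h1 t2 h2 ⟨a, b, ha, hb, hab, heq3⟩
    rw [this.1, this.2]
    exact ⟨rfl, rfl⟩

lemma comb_eq_max {a b p q M : ℝ} (ha : 0 < a) (hb : 0 < b) (hab : a + b = 1)
    (hp : p ≤ M) (hq : q ≤ M) (hsum : a * p + b * q = M) : p = M ∧ q = M := by
  have h1 : 0 ≤ a * (M - p) := mul_nonneg ha.le (by linarith)
  have h2 : 0 ≤ b * (M - q) := mul_nonneg hb.le (by linarith)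
  have h3 : a * (M - p) + b * (M - q) = (a + b) * M - (a * p + b * q) := by ring
  rw [hab, hsum, one_mul, sub_self] at h3
  have e1 : a * (M - p) = 0 := by linarith
  have e2 : b * (M - q) = 0 := by linarith
  constructor
  · rcases mul_eq_zero.mp e1 with h | h
    · linarith
    · linarith
  · rcases mul_eq_zero.mp e2 with h | h
    · linarith
    · linarith

lemma comb_eq_min {a b p q M : ℝ} (ha : 0 < a) (hb : 0 < b) (hab : a + b = 1)
    (hp : M ≤ p) (hq : M ≤ q) (hsum : a * p + b * q = M) : p = M ∧ q = M := by
  have := comb_eq_max ha hb hab (neg_le_neg hp) (neg_le_neg hq)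
    (show a * (-p) + b * (-q) = -M by linarith)
  constructor <;> linarith [this.1, this.2]

/-- The extreme points of `Pm m` form a finite set of cardinality `2^m`. -/
lemma ext_finset {n : ℕ} {lam : ℕ → ℝ} {r : ℕ → ℕ} (hn : 2 ≤ n)
    (hlam : ∀ i, 1 ≤ i → i < n → lam (i + 1) < lam i)
    (hr : ∀ j, 1 ≤ j → j ≤ n - 1 → 1 ≤ r j ∧ r j ≤ n - j) :
    ∀ m, m ≤ n - 1 → ∃ V : Finset (ℕ → ℝ),
      (↑V ⊆ Pm n lam r m) ∧ Set.extremePoints ℝ (Pm n lam r m) = ↑V ∧ V.card = 2^m := by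
  intro m
  induction m with
  | zero =>
    intro _
    classical
    refine ⟨{0}, ?_, ?_, ?_⟩
    · intro t ht
      simp only [Finset.coe_singleton, Set.mem_singleton_iff] at ht
      rw [ht, Pm_zero]; rfl
    · rw [Pm_zero, extremePoints_singleton]; simp
    · simp
  | succ m ih =>
    intro hm1
    classical
    obtain ⟨V, hVsub, hVext, hVcard⟩ := ih (by omega)
    have hrm := hr (m+1) (by omega) (by omega)
    -- basic facts
    have F0 : ∀ t ∈ Pm n lam r m, t (m+1) = 0 := fun t ht => ht.1 (m+1) (by omega)
    have F1 : ∀ t ∈ Pm n lam r m,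
        ent lam r t (r (m+1) + 1) m < ent lam r t (r (m+1)) m := by
      intro t ht
      exact ent_strict hlam hr (by omega) ht.2 m le_rfl (r (m+1)) (by omega) (by omega)
    have Ftr : ∀ t ∈ Pm n lam r m, Function.update t (m+1) 0 = t := by
      intro t ht
      rw [← F0 t ht]
      exact Function.update_eq_self _ _
    have F3 : ∀ t ∈ Pm n lam r m, ∀ v : ℝ,
        ent lam r t (r (m+1) + 1) m ≤ v → v ≤ ent lam r t (r (m+1)) m →
        Function.update t (m+1) v ∈ Pm n lam r (m+1) := by
      intro t ht v hv1 hv2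
      rw [mem_Pm_succ]
      refine ⟨?_, ?_, ?_⟩
      · rw [Function.update_idem, ← F0 t ht, Function.update_eq_self]
        exact ht
      · rw [ent_update_high le_rfl, Function.update_self]
        exact hv1
      · rw [ent_update_high le_rfl, Function.update_self]
        exact hv2
    set fH : (ℕ → ℝ) → (ℕ → ℝ) :=
      fun t => Function.update t (m+1) (ent lam r t (r (m+1)) m) with hfH
    set fL : (ℕ → ℝ) → (ℕ → ℝ) :=
      fun t => Function.update t (m+1) (ent lam r t (r (m+1) + 1) m) with hfL
    have hHmem : ∀ t ∈ Pm n lam r m, fH t ∈ Pm n lam r (m+1) := by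
      intro t ht
      exact F3 t ht _ (le_of_lt (F1 t ht)) le_rfl
    have hLmem : ∀ t ∈ Pm n lam r m, fL t ∈ Pm n lam r (m+1) := by
      intro t ht
      exact F3 t ht _ le_rfl (le_of_lt (F1 t ht))
    have hupd_eq : ∀ t ∈ Pm n lam r (m+1), ∀ v : ℝ, v = t (m+1) →
        Function.update (Function.update t (m+1) 0) (m+1) v = t := by
      intro t _ v hv
      funext k
      by_cases hk : k = m+1
      · subst hk
        rw [Function.update_self, hv]
      · rw [Function.update_of_ne hk, Function.update_of_ne hk]
    -- extremality characterization
    have hext : Set.extremePoints ℝ (Pm n lam r (m+1)) =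
        fH '' (Set.extremePoints ℝ (Pm n lam r m)) ∪
        fL '' (Set.extremePoints ℝ (Pm n lam r m)) := by
      apply Set.Subset.antisymm
      · intro t ht
        rw [mem_extremePoints] at ht
        obtain ⟨htm, hte⟩ := ht
        obtain ⟨hu, hb1, hb2⟩ := mem_Pm_succ.mp htm
        set u := Function.update t (m+1) 0 with hudef
        have hucoord : ∀ k, k ≠ m+1 → u k = t k := fun k hk => Function.update_of_ne hk _ _
        have hentu : ∀ i, ent lam r u i m = ent lam r t i m := fun i => ent_update_high le_rfl t 0 i
        -- step 1 : boundary value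
        have step1 : t (m+1) = ent lam r t (r (m+1) + 1) m ∨ t (m+1) = ent lam r t (r (m+1)) m := by
          by_contra hcon
          push_neg at hcon
          have hlt1 : ent lam r t (r (m+1) + 1) m < t (m+1) := lt_of_le_of_ne hb1 (Ne.symm hcon.1)
          have hlt2 : t (m+1) < ent lam r t (r (m+1)) m := lt_of_le_of_ne hb2 hcon.2
          set ε : ℝ := min (t (m+1) - ent lam r t (r (m+1) + 1) m)
            (ent lam r t (r (m+1)) m - t (m+1)) with hε
          have hεle1 : ε ≤ t (m+1) - ent lam r t (r (m+1) + 1) m := min_le_left _ _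
          have hεle2 : ε ≤ ent lam r t (r (m+1)) m - t (m+1) := min_le_right _ _
          have hε0 : 0 < ε := lt_min (by linarith) (by linarith)
          have hmem1 : Function.update u (m+1) (t (m+1) + ε) ∈ Pm n lam r (m+1) := by
            apply F3 u hu <;> rw [hentu] <;> linarith
          have hmem2 : Function.update u (m+1) (t (m+1) - ε) ∈ Pm n lam r (m+1) := by
            apply F3 u hu <;> rw [hentu] <;> linarith
          have hseg : t ∈ openSegment ℝ (Function.update u (m+1) (t (m+1) + ε))
              (Function.update u (m+1) (t (m+1) - ε)) := by
            refine ⟨1/2, 1/2, by norm_num, by norm_num, by norm_num, ?_⟩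
            funext k
            by_cases hk : k = m+1
            · subst hk
              show (1/2 : ℝ) * _ + (1/2 : ℝ) * _ = _
              rw [Function.update_self, Function.update_self]; ring
            · show (1/2 : ℝ) * _ + (1/2 : ℝ) * _ = _
              rw [Function.update_of_ne hk, Function.update_of_ne hk, hucoord k hk]; ring
          have hres := hte _ hmem1 _ hmem2 hseg
          have h1 := congrFun hres.1 (m+1)
          rw [Function.update_self] at h1
          linarith
        -- step 2 : truncation is extreme
        have key : ∀ ρ : ℕ, (∀ w ∈ Pm n lam r m, ent lam r w (r (m+1) + 1) m ≤ ent lam r w ρ m ∧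
              ent lam r w ρ m ≤ ent lam r w (r (m+1)) m) →
            t (m+1) = ent lam r t ρ m → u ∈ Set.extremePoints ℝ (Pm n lam r m) := by
          intro ρ hρle hρ
          rw [mem_extremePoints]
          refine ⟨hu, ?_⟩
          rintro u1 h1 u2 h2 ⟨a, b, ha, hb, hab, heq⟩
          set w1 := Function.update u1 (m+1) (ent lam r u1 ρ m) with hw1
          set w2 := Function.update u2 (m+1) (ent lam r u2 ρ m) with hw2
          have hw1m : w1 ∈ Pm n lam r (m+1) := F3 u1 h1 _ (hρle u1 h1).1 (hρle u1 h1).2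
          have hw2m : w2 ∈ Pm n lam r (m+1) := F3 u2 h2 _ (hρle u2 h2).1 (hρle u2 h2).2
          have hcomb : a • w1 + b • w2 = t := by
            funext k
            show a * w1 k + b * w2 k = t k
            by_cases hk : k = m+1
            · subst hk
              rw [hw1, hw2, Function.update_self, Function.update_self, hρ]
              have e : ent lam r t ρ m = ent lam r (a • u1 + b • u2) ρ m := by
                rw [heq, hentu]
              rw [e, ent_affine lam r u1 u2 hab]
            · rw [hw1, hw2, Function.update_of_ne hk, Function.update_of_ne hk]
              have e : u k = t k := hucoord k hk
              rw [← e, ← heq]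
              rfl
          have hres := hte w1 hw1m w2 hw2m ⟨a, b, ha, hb, hab, hcomb⟩
          constructor
          · calc u1 = Function.update u1 (m+1) 0 := (Ftr u1 h1).symm
              _ = Function.update w1 (m+1) 0 := by rw [hw1, Function.update_idem]
              _ = u := by rw [hres.1]
          · calc u2 = Function.update u2 (m+1) 0 := (Ftr u2 h2).symm
              _ = Function.update w2 (m+1) 0 := by rw [hw2, Function.update_idem]
              _ = u := by rw [hres.2]
        rcases step1 with hcase | hcase
        · have hue : u ∈ Set.extremePoints ℝ (Pm n lam r m) :=
            key (r (m+1) + 1) (fun w hw => ⟨le_rfl, le_of_lt (F1 w hw)⟩) hcase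
          refine Or.inr ⟨u, hue, ?_⟩
          show Function.update u (m+1) (ent lam r u (r (m+1) + 1) m) = t
          rw [hentu]
          exact hupd_eq t htm _ hcase.symm
        · have hue : u ∈ Set.extremePoints ℝ (Pm n lam r m) :=
            key (r (m+1)) (fun w hw => ⟨le_of_lt (F1 w hw), le_rfl⟩) hcase
          refine Or.inl ⟨u, hue, ?_⟩
          show Function.update u (m+1) (ent lam r u (r (m+1)) m) = t
          rw [hentu]
          exact hupd_eq t htm _ hcase.symm
      · rintro t' (⟨v, hv, rfl⟩ | ⟨v, hv, rfl⟩)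
        · -- upper vertex
          have hvm : v ∈ Pm n lam r m := extremePoints_subset hv
          rw [mem_extremePoints] at hv ⊢
          refine ⟨hHmem v hvm, ?_⟩
          rintro x1 hx1 x2 hx2 ⟨a, b, ha, hb, hab, heq⟩
          obtain ⟨hu1, hb11, hb12⟩ := mem_Pm_succ.mp hx1
          obtain ⟨hu2, hb21, hb22⟩ := mem_Pm_succ.mp hx2
          set u1 := Function.update x1 (m+1) 0 with hu1def
          set u2 := Function.update x2 (m+1) 0 with hu2def
          have hcomb : a • u1 + b • u2 = v := by
            funext k
            show a * u1 k + b * u2 k = v k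
            by_cases hk : k = m+1
            · subst hk
              rw [hu1def, hu2def, Function.update_self, Function.update_self, F0 v hvm]
              ring
            · rw [hu1def, hu2def, Function.update_of_ne hk, Function.update_of_ne hk]
              have e := congrFun heq k
              have e2 : fH v k = v k := Function.update_of_ne hk _ _
              rw [e2] at e
              exact e
          have hres := hv.2 u1 hu1 u2 hu2 ⟨a, b, ha, hb, hab, hcomb⟩
          have hM := congrFun heq (m+1)
          have eM : fH v (m+1) = ent lam r v (r (m+1)) m := Function.update_self _ _ _
          rw [eM] at hM
          set M := ent lam r v (r (m+1)) m with hMdef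
          have hx1le : x1 (m+1) ≤ M := by
            calc x1 (m+1) ≤ ent lam r x1 (r (m+1)) m := hb12
              _ = ent lam r u1 (r (m+1)) m := (ent_update_high le_rfl x1 0 _).symm
              _ = M := by rw [hres.1]
          have hx2le : x2 (m+1) ≤ M := by
            calc x2 (m+1) ≤ ent lam r x2 (r (m+1)) m := hb22
              _ = ent lam r u2 (r (m+1)) m := (ent_update_high le_rfl x2 0 _).symm
              _ = M := by rw [hres.2]
          have hM' : a * x1 (m+1) + b * x2 (m+1) = M := hM
          obtain ⟨hx1eq, hx2eq⟩ := comb_eq_max ha hb hab hx1le hx2le hM'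
          constructor
          · funext k
            by_cases hk : k = m+1
            · subst hk
              rw [show fH v (m+1) = M from Function.update_self _ _ _, hx1eq]
            · have e1 : x1 k = u1 k := (Function.update_of_ne hk _ _).symm
              have e2 : fH v k = v k := Function.update_of_ne hk _ _
              rw [e1, e2, hres.1]
          · funext k
            by_cases hk : k = m+1
            · subst hk
              rw [show fH v (m+1) = M from Function.update_self _ _ _, hx2eq]
            · have e1 : x2 k = u2 k := (Function.update_of_ne hk _ _).symm
              have e2 : fH v k = v k := Function.update_of_ne hk _ _
              rw [e1, e2, hres.2]
        · -- lower vertex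
          have hvm : v ∈ Pm n lam r m := extremePoints_subset hv
          rw [mem_extremePoints] at hv ⊢
          refine ⟨hLmem v hvm, ?_⟩
          rintro x1 hx1 x2 hx2 ⟨a, b, ha, hb, hab, heq⟩
          obtain ⟨hu1, hb11, hb12⟩ := mem_Pm_succ.mp hx1
          obtain ⟨hu2, hb21, hb22⟩ := mem_Pm_succ.mp hx2
          set u1 := Function.update x1 (m+1) 0 with hu1def
          set u2 := Function.update x2 (m+1) 0 with hu2def
          have hcomb : a • u1 + b • u2 = v := by
            funext k
            show a * u1 k + b * u2 k = v k
            by_cases hk : k = m+1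
            · subst hk
              rw [hu1def, hu2def, Function.update_self, Function.update_self, F0 v hvm]
              ring
            · rw [hu1def, hu2def, Function.update_of_ne hk, Function.update_of_ne hk]
              have e := congrFun heq k
              have e2 : fL v k = v k := Function.update_of_ne hk _ _
              rw [e2] at e
              exact e
          have hres := hv.2 u1 hu1 u2 hu2 ⟨a, b, ha, hb, hab, hcomb⟩
          have hM := congrFun heq (m+1)
          have eM : fL v (m+1) = ent lam r v (r (m+1) + 1) m := Function.update_self _ _ _
          rw [eM] at hM
          set M := ent lam r v (r (m+1) + 1) m with hMdef
          have hx1le : M ≤ x1 (m+1) := by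
            calc M = ent lam r u1 (r (m+1) + 1) m := by rw [hres.1]
              _ = ent lam r x1 (r (m+1) + 1) m := ent_update_high le_rfl x1 0 _
              _ ≤ x1 (m+1) := hb11
          have hx2le : M ≤ x2 (m+1) := by
            calc M = ent lam r u2 (r (m+1) + 1) m := by rw [hres.2]
              _ = ent lam r x2 (r (m+1) + 1) m := ent_update_high le_rfl x2 0 _
              _ ≤ x2 (m+1) := hb21
          have hM' : a * x1 (m+1) + b * x2 (m+1) = M := hM
          obtain ⟨hx1eq, hx2eq⟩ := comb_eq_min ha hb hab hx1le hx2le hM'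
          constructor
          · funext k
            by_cases hk : k = m+1
            · subst hk
              rw [show fL v (m+1) = M from Function.update_self _ _ _, hx1eq]
            · have e1 : x1 k = u1 k := (Function.update_of_ne hk _ _).symm
              have e2 : fL v k = v k := Function.update_of_ne hk _ _
              rw [e1, e2, hres.1]
          · funext k
            by_cases hk : k = m+1
            · subst hk
              rw [show fL v (m+1) = M from Function.update_self _ _ _, hx2eq]
            · have e1 : x2 k = u2 k := (Function.update_of_ne hk _ _).symm
              have e2 : fL v k = v k := Function.update_of_ne hk _ _
              rw [e1, e2, hres.2]
    -- injectivity and disjointness for cardinality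
    have htrunc : ∀ t ∈ Pm n lam r m, ∀ v : ℝ, Function.update (Function.update t (m+1) v) (m+1) 0 = t := by
      intro t ht v
      rw [Function.update_idem]
      exact Ftr t ht
    have hinjH : Set.InjOn fH ↑V := by
      intro a haV b hbV hab2
      have := congrArg (fun w => Function.update w (m+1) (0:ℝ)) hab2
      rwa [hfH, htrunc a (hVsub haV) _, htrunc b (hVsub hbV) _] at this
    have hinjL : Set.InjOn fL ↑V := by
      intro a haV b hbV hab2
      have := congrArg (fun w => Function.update w (m+1) (0:ℝ)) hab2
      rwa [hfL, htrunc a (hVsub haV) _, htrunc b (hVsub hbV) _] at this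
    have hdisj : Disjoint (V.image fH) (V.image fL) := by
      rw [Finset.disjoint_left]
      rintro w hw1 hw2
      obtain ⟨a, haV, rfl⟩ := Finset.mem_image.mp hw1
      obtain ⟨b, hbV, hba⟩ := Finset.mem_image.mp hw2
      have haP := hVsub haV
      have hbP := hVsub hbV
      have hab2 : b = a := by
        have := congrArg (fun w => Function.update w (m+1) (0:ℝ)) hba
        rwa [hfH, hfL, htrunc a haP _, htrunc b hbP _] at this
      subst hab2
      have h1 := congrFun hba (m+1)
      rw [hfH, hfL] at h1
      simp only [Function.update_self] at h1
      linarith [F1 b hbP, h1.le, h1.ge]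
    refine ⟨V.image fH ∪ V.image fL, ?_, ?_, ?_⟩
    · intro w hw
      simp only [Finset.coe_union, Finset.coe_image, Set.mem_union, Set.mem_image,
        Finset.mem_coe] at hw
      rcases hw with ⟨a, haV, rfl⟩ | ⟨a, haV, rfl⟩
      · exact hHmem a (hVsub haV)
      · exact hLmem a (hVsub haV)
    · rw [hext, hVext]
      simp only [Finset.coe_union, Finset.coe_image]
    · rw [Finset.card_union_of_disjoint hdisj, Finset.card_image_of_injOn hinjH,
        Finset.card_image_of_injOn hinjL, hVcard]
      ring

/-- entries of the "midpoint" point. -/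
noncomputable def cEd (lam : ℕ → ℝ) (r : ℕ → ℕ) : ℕ → ℕ → ℝ
  | 0 => lam
  | d+1 => fun i =>
    if i < r (d+1) then cEd lam r d i
    else if i = r (d+1) then (cEd lam r d (r (d+1)) + cEd lam r d (r (d+1) + 1)) / 2
    else cEd lam r d (i+1)

noncomputable def cE (lam : ℕ → ℝ) (r : ℕ → ℕ) (i d : ℕ) : ℝ := cEd lam r d i

/-- the midpoint parameter point. -/
noncomputable def cpt (n : ℕ) (lam : ℕ → ℝ) (r : ℕ → ℕ) : ℕ → ℝ := fun d =>
  if 1 ≤ d ∧ d ≤ n - 1 then (cE lam r (r d) (d-1) + cE lam r (r d + 1) (d-1)) / 2 else 0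

lemma cE_succ_lt (lam : ℕ → ℝ) (r : ℕ → ℕ) {i d : ℕ} (h : i < r (d+1)) :
    cE lam r i (d+1) = cE lam r i d := by simp [cE, cEd, h]

lemma cE_succ_eq (lam : ℕ → ℝ) (r : ℕ → ℕ) (d : ℕ) :
    cE lam r (r (d+1)) (d+1) = (cE lam r (r (d+1)) d + cE lam r (r (d+1) + 1) d) / 2 := by
  simp [cE, cEd]

lemma cE_succ_gt (lam : ℕ → ℝ) (r : ℕ → ℕ) {i d : ℕ} (h : r (d+1) < i) :
    cE lam r i (d+1) = cE lam r (i+1) d := by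
  have h1 : ¬ i < r (d+1) := by omega
  have h2 : ¬ i = r (d+1) := by omega
  simp [cE, cEd, h1, h2]

lemma ent_cpt {n : ℕ} {lam : ℕ → ℝ} {r : ℕ → ℕ} :
    ∀ d, d ≤ n - 1 → ∀ i, ent lam r (cpt n lam r) i d = cE lam r i d := by
  intro d
  induction d with
  | zero => intro _ i; rfl
  | succ d ih =>
    intro hd i
    rcases lt_trichotomy i (r (d+1)) with hc | hc | hc
    · rw [ent_succ_lt lam r _ hc, cE_succ_lt lam r hc, ih (by omega)]
    · subst hc
      rw [ent_succ_eq, cE_succ_eq]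
      show cpt n lam r (d+1) = _
      rw [cpt, if_pos (⟨by omega, by omega⟩ : 1 ≤ d+1 ∧ d+1 ≤ n-1)]
      rfl
    · rw [ent_succ_gt lam r _ hc, cE_succ_gt lam r hc, ih (by omega)]

lemma cpt_strict {n : ℕ} {lam : ℕ → ℝ} {r : ℕ → ℕ} (hn : 2 ≤ n)
    (hlam : ∀ i, 1 ≤ i → i < n → lam (i + 1) < lam i)
    (hr : ∀ j, 1 ≤ j → j ≤ n - 1 → 1 ≤ r j ∧ r j ≤ n - j) :
    ∀ m, m ≤ n - 1 → ∀ d, 1 ≤ d → d ≤ m →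
      ent lam r (cpt n lam r) (r d + 1) (d-1) < cpt n lam r d ∧
      cpt n lam r d < ent lam r (cpt n lam r) (r d) (d-1) := by
  intro m
  induction m with
  | zero => intro _ d h1 h2; omega
  | succ m ih =>
    intro hm d h1 h2
    rcases Nat.lt_or_ge d (m+1) with hc | hc
    · exact ih (by omega) d h1 (by omega)
    · have hd : d = m + 1 := by omega
      subst hd
      have hrm := hr (m+1) (by omega) (by omega)
      have hcons : ∀ d', 1 ≤ d' → d' ≤ m →
          ent lam r (cpt n lam r) (r d' + 1) (d'-1) ≤ cpt n lam r d' ∧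
          cpt n lam r d' ≤ ent lam r (cpt n lam r) (r d') (d'-1) := by
        intro d' a1 a2
        exact ⟨(ih (by omega) d' a1 a2).1.le, (ih (by omega) d' a1 a2).2.le⟩
      have hstrict := ent_strict hlam hr (show m ≤ n - 1 by omega) hcons m le_rfl
        (r (m+1)) (by omega) (by omega)
      have e : cpt n lam r (m+1) =
          (ent lam r (cpt n lam r) (r (m+1)) m + ent lam r (cpt n lam r) (r (m+1) + 1) m) / 2 := by
        rw [cpt, if_pos (⟨by omega, by omega⟩ : 1 ≤ m+1 ∧ m+1 ≤ n-1),
          ent_cpt m (by omega), ent_cpt m (by omega)]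
        rfl
      rw [show m + 1 - 1 = m from rfl, e]
      constructor <;> linarith

lemma cpt_mem {n : ℕ} {lam : ℕ → ℝ} {r : ℕ → ℕ} (hn : 2 ≤ n)
    (hlam : ∀ i, 1 ≤ i → i < n → lam (i + 1) < lam i)
    (hr : ∀ j, 1 ≤ j → j ≤ n - 1 → 1 ≤ r j ∧ r j ≤ n - j) :
    cpt n lam r ∈ Pm n lam r (n-1) := by
  constructor
  · intro d hd
    rw [cpt, if_neg hd]
  · intro d h1 h2
    have := cpt_strict hn hlam hr (n-1) le_rfl d h1 h2
    exact ⟨this.1.le, this.2.le⟩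

lemma pert_mem {n : ℕ} {lam : ℕ → ℝ} {r : ℕ → ℕ} (hn : 2 ≤ n)
    (hlam : ∀ i, 1 ≤ i → i < n → lam (i + 1) < lam i)
    (hr : ∀ j, 1 ≤ j → j ≤ n - 1 → 1 ≤ r j ∧ r j ≤ n - j)
    {k : ℕ} (hk : 1 ≤ k ∧ k ≤ n - 1) {δ : ℝ} (hδ0 : 0 ≤ δ)
    (hδ : ∀ d, 1 ≤ d → d ≤ n - 1 →
      δ ≤ cpt n lam r d - ent lam r (cpt n lam r) (r d + 1) (d-1) ∧
      δ ≤ ent lam r (cpt n lam r) (r d) (d-1) - cpt n lam r d) :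
    Function.update (cpt n lam r) k (cpt n lam r k + δ) ∈ Pm n lam r (n-1) := by
  set u := Function.update (cpt n lam r) k (cpt n lam r k + δ) with hu
  have hbound : ∀ j, cpt n lam r j ≤ u j ∧ u j ≤ cpt n lam r j + δ := by
    intro j
    by_cases hj : j = k
    · subst hj; rw [hu, Function.update_self]; exact ⟨by linarith, le_rfl⟩
    · rw [hu, Function.update_of_ne hj]; exact ⟨le_rfl, by linarith⟩
  constructor
  · intro d hd
    have : u d = cpt n lam r d := by
      rw [hu, Function.update_of_ne (by omega)]
    rw [this, cpt, if_neg hd]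
  · intro d h1 h2
    have hp1 := ent_perturb lam r hbound hδ0 (r d + 1) (d-1)
    have hp2 := ent_perturb lam r hbound hδ0 (r d) (d-1)
    have hgap := hδ d h1 h2
    have hud := hbound d
    constructor
    · linarith [hp1.2, hgap.1, hud.1]
    · linarith [hp2.1, hgap.2, hud.2]

/-- the direction vector attached to free coordinate `d`. -/
def chi (n : ℕ) (r : ℕ → ℕ) (d : ℕ) : GZpos n → ℝ :=
  fun p => if sel r ((p.1.1 : ℕ)) ((p.1.2 : ℕ) - (p.1.1 : ℕ)) = Sum.inr d then 1 else 0

lemma Psi_sub {n : ℕ} (lam : ℕ → ℝ) (r : ℕ → ℕ) (t t' : ℕ → ℝ) :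
    Psi n lam r t - Psi n lam r t' = ∑ d ∈ Finset.Icc 1 (n-1), (t d - t' d) • chi n r d := by
  funext p
  have hRHS : (∑ d ∈ Finset.Icc 1 (n-1), (t d - t' d) • chi n r d) p
      = ∑ d ∈ Finset.Icc 1 (n-1), (t d - t' d) * chi n r d p := by
    rw [Finset.sum_apply]
    rfl
  have hLHS : (Psi n lam r t - Psi n lam r t') p
      = Sum.elim lam t (sel r ((p.1.1 : ℕ)) ((p.1.2 : ℕ) - (p.1.1 : ℕ)))
        - Sum.elim lam t' (sel r ((p.1.1 : ℕ)) ((p.1.2 : ℕ) - (p.1.1 : ℕ))) := rfl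
  rw [hLHS, hRHS]
  cases hs : sel r ((p.1.1 : ℕ)) ((p.1.2 : ℕ) - (p.1.1 : ℕ)) with
  | inl m =>
    rw [Finset.sum_eq_zero]
    · simp
    · intro d _
      unfold chi
      rw [hs, if_neg (by simp)]
      ring
  | inr k =>
    have hk := sel_inr_le r hs
    have hkmem : k ∈ Finset.Icc 1 (n-1) := by
      rw [Finset.mem_Icc]
      have h2 := p.2
      have hb : (p.1.2 : ℕ) ≤ n := by omega
      omega
    have hterm : ∀ d ∈ Finset.Icc 1 (n-1),
        (t d - t' d) * chi n r d p = if d = k then t k - t' k else 0 := by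
      intro d _
      unfold chi
      rw [hs]
      by_cases hdk : d = k
      · subst hdk; rw [if_pos rfl, if_pos rfl]; ring
      · rw [if_neg (by simpa using (Ne.symm hdk)), if_neg hdk]; ring
    rw [Finset.sum_congr rfl hterm, Finset.sum_ite_eq' (Finset.Icc 1 (n-1)) k, if_pos hkmem]
    simp

/-- position of the free entry on diagonal `d`. -/
def posd (n : ℕ) (r : ℕ → ℕ) (d : ℕ) (h1 : 1 ≤ r d) (h2 : 1 ≤ d) (h3 : r d + d ≤ n) : GZpos n :=
  ⟨(⟨r d, by omega⟩, ⟨r d + d, by omega⟩), ⟨h1, Nat.lt_add_of_pos_right (by omega)⟩⟩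

lemma chi_posd {n : ℕ} {r : ℕ → ℕ} {d : ℕ} (h1 : 1 ≤ r d) (h2 : 1 ≤ d) (h3 : r d + d ≤ n)
    (k : ℕ) : chi n r k (posd n r d h1 h2 h3) = if k = d then 1 else 0 := by
  have e : chi n r k (posd n r d h1 h2 h3)
      = if sel r (r d) (r d + d - r d) = Sum.inr k then 1 else 0 := rfl
  rw [e, show r d + d - r d = d by omega]
  obtain ⟨e', rfl⟩ : ∃ e', d = e' + 1 := ⟨d - 1, by omega⟩
  rw [sel_succ_eq]
  by_cases hkd : k = e' + 1
  · subst hkd; rw [if_pos rfl, if_pos rfl]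
  · rw [if_neg (by simpa using (Ne.symm hkd)), if_neg hkd]

lemma lam_chain {n : ℕ} {lam : ℕ → ℝ} (hlam : ∀ i, 1 ≤ i → i < n → lam (i + 1) < lam i) :
    ∀ b a, 1 ≤ a → a ≤ b → b ≤ n → lam b ≤ lam a := by
  intro b
  induction b with
  | zero => intro a h1 h2 _; omega
  | succ b ih =>
    intro a h1 h2 h3
    rcases Nat.lt_or_ge a (b+1) with hc | hc
    · calc lam (b+1) ≤ lam b := (hlam b (by omega) (by omega)).le
        _ ≤ lam a := ih a h1 (by omega) (by omega)
    · have : a = b + 1 := by omega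
      rw [this]

lemma entry_continuous {n : ℕ} (lam : ℕ → ℝ) (i j : ℕ) :
    Continuous fun x : GZpos n → ℝ => entry n lam x i j := by
  by_cases h : 0 < i ∧ i < j ∧ j ≤ n
  · simp only [entry, dif_pos h]
    exact continuous_apply _
  · simp only [entry, dif_neg h]
    exact continuous_const

lemma fface_closed {n : ℕ} (lam : ℕ → ℝ) (r : ℕ → ℕ) : IsClosed (Fface n lam r) := by
  have hGZ : IsClosed (GZ n lam) := by
    have e : GZ n lam = ⋂ (i : ℕ), ⋂ (j : ℕ), ⋂ (_ : 0 < i ∧ i ≤ j ∧ j + 1 ≤ n),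
        ({x : GZpos n → ℝ | entry n lam x i (j+1) ≤ entry n lam x i j} ∩
         {x : GZpos n → ℝ | entry n lam x (i+1) (j+1) ≤ entry n lam x i (j+1)}) := by
      ext x
      simp only [GZ, Set.mem_iInter, Set.mem_inter_iff, Set.mem_setOf_eq]
      constructor
      · intro h i j hc
        exact ⟨(h i j hc.1 hc.2.1 hc.2.2).1, (h i j hc.1 hc.2.1 hc.2.2).2⟩
      · intro h i j h1 h2 h3
        exact (h i j ⟨h1, h2, h3⟩)
    rw [e]
    exact isClosed_iInter fun i => isClosed_iInter fun j => isClosed_iInter fun _ =>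
      ((isClosed_le (entry_continuous lam i (j+1)) (entry_continuous lam i j)).inter
        (isClosed_le (entry_continuous lam (i+1) (j+1)) (entry_continuous lam i (j+1))))
  have e2 : Fface n lam r = GZ n lam ∩
      (⋂ (j : ℕ), ⋂ (_ : 1 ≤ j ∧ j ≤ n - 1),
        ((⋂ (i : ℕ), ⋂ (_ : 1 ≤ i ∧ i < r j),
          {x : GZpos n → ℝ | entry n lam x i (j+i) = entry n lam x i (j+i-1)}) ∩
         (⋂ (i : ℕ), ⋂ (_ : r j < i ∧ i ≤ n - j),
          {x : GZpos n → ℝ | entry n lam x i (j+i) = entry n lam x (i+1) (j+i)}))) := by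
    ext x
    simp only [Fface, Set.mem_inter_iff, Set.mem_iInter, Set.mem_setOf_eq, Set.mem_sep_iff]
    constructor
    · intro h
      exact ⟨h.1, fun j hj => ⟨fun i hi => (h.2 j hj.1 hj.2).1 i hi.1 hi.2,
        fun i hi => (h.2 j hj.1 hj.2).2 i hi.1 hi.2⟩⟩
    · intro h
      exact ⟨h.1, fun j hj1 hj2 => ⟨fun i h1 h2 => (h.2 j ⟨hj1, hj2⟩).1 i ⟨h1, h2⟩,
        fun i h1 h2 => (h.2 j ⟨hj1, hj2⟩).2 i ⟨h1, h2⟩⟩⟩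
  rw [e2]
  apply hGZ.inter
  refine isClosed_iInter fun j => isClosed_iInter fun _ => IsClosed.inter ?_ ?_
  · exact isClosed_iInter fun i => isClosed_iInter fun _ =>
      isClosed_eq (entry_continuous lam i (j+i)) (entry_continuous lam i (j+i-1))
  · exact isClosed_iInter fun i => isClosed_iInter fun _ =>
      isClosed_eq (entry_continuous lam i (j+i)) (entry_continuous lam (i+1) (j+i))

lemma fface_subset_box {n : ℕ} {lam : ℕ → ℝ} {r : ℕ → ℕ} (hn : 2 ≤ n)
    (hlam : ∀ i, 1 ≤ i → i < n → lam (i + 1) < lam i)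
    (hr : ∀ j, 1 ≤ j → j ≤ n - 1 → 1 ≤ r j ∧ r j ≤ n - j) :
    Fface n lam r ⊆ Set.univ.pi (fun _ : GZpos n => Set.Icc (lam n) (lam 1)) := by
  rw [face_eq hn hlam hr]
  rintro x ⟨t, ht, rfl⟩
  intro p _
  obtain ⟨⟨a, b⟩, ha, hab⟩ := p
  have ha' : 0 < (a : ℕ) := ha
  have hab' : (a : ℕ) < (b : ℕ) := hab
  have hb : (b : ℕ) ≤ n := by omega
  have hbnd := ent_bounds hlam hr le_rfl ht.2 ((b:ℕ) - (a:ℕ)) (by omega) (a:ℕ) (by omega)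
    (by omega)
  have he : Psi n lam r t ⟨(a, b), ha, hab⟩ = ent lam r t (a:ℕ) ((b:ℕ) - (a:ℕ)) := rfl
  rw [he]
  constructor
  · calc lam n ≤ lam ((a:ℕ) + ((b:ℕ) - (a:ℕ))) := lam_chain hlam n _ (by omega) (by omega) le_rfl
      _ ≤ ent lam r t (a:ℕ) ((b:ℕ) - (a:ℕ)) := hbnd.1
  · calc ent lam r t (a:ℕ) ((b:ℕ) - (a:ℕ)) ≤ lam (a:ℕ) := hbnd.2
      _ ≤ lam 1 := lam_chain hlam (a:ℕ) 1 le_rfl (by omega) (by omega)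

/-- the span of the `chi` vectors equals the vector span of the face. -/
lemma fface_vectorSpan {n : ℕ} {lam : ℕ → ℝ} {r : ℕ → ℕ} (hn : 2 ≤ n)
    (hlam : ∀ i, 1 ≤ i → i < n → lam (i + 1) < lam i)
    (hr : ∀ j, 1 ≤ j → j ≤ n - 1 → 1 ≤ r j ∧ r j ≤ n - j) :
    vectorSpan ℝ (Fface n lam r) = Submodule.span ℝ (chi n r '' Set.Icc 1 (n-1)) := by
  apply le_antisymm
  · rw [vectorSpan_def]
    apply Submodule.span_le.mpr
    rintro v hv
    rw [Set.mem_vsub] at hv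
    obtain ⟨x, hx, y, hy, rfl⟩ := hv
    rw [face_eq hn hlam hr] at hx hy
    obtain ⟨t, ht, rfl⟩ := hx
    obtain ⟨t', ht', rfl⟩ := hy
    rw [vsub_eq_sub, Psi_sub]
    exact Submodule.sum_mem _ fun d hd => Submodule.smul_mem _ _
      (Submodule.subset_span ⟨d, Set.mem_Icc.mpr (Finset.mem_Icc.mp hd), rfl⟩)
  · apply Submodule.span_le.mpr
    rintro v ⟨d, hd, rfl⟩
    rw [Set.mem_Icc] at hd
    -- uniform slack
    have hSne : (Finset.Icc 1 (n-1)).Nonempty := Finset.nonempty_Icc.mpr (by omega)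
    set g : ℕ → ℝ := fun d => min (cpt n lam r d - ent lam r (cpt n lam r) (r d + 1) (d-1))
      (ent lam r (cpt n lam r) (r d) (d-1) - cpt n lam r d) with hg
    set δ : ℝ := (Finset.Icc 1 (n-1)).inf' hSne g with hδdef
    have hδpos : 0 < δ := by
      rw [hδdef, Finset.lt_inf'_iff]
      intro b hb
      rw [Finset.mem_Icc] at hb
      have := cpt_strict hn hlam hr (n-1) le_rfl b hb.1 hb.2
      exact lt_min (by linarith [this.1]) (by linarith [this.2])
    have hδle : ∀ d', 1 ≤ d' → d' ≤ n - 1 →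
        δ ≤ cpt n lam r d' - ent lam r (cpt n lam r) (r d' + 1) (d'-1) ∧
        δ ≤ ent lam r (cpt n lam r) (r d') (d'-1) - cpt n lam r d' := by
      intro d' h1 h2
      have hmem : d' ∈ Finset.Icc 1 (n-1) := Finset.mem_Icc.mpr ⟨h1, h2⟩
      have hle := Finset.inf'_le g hmem
      exact ⟨le_trans hle (min_le_left _ _), le_trans hle (min_le_right _ _)⟩
    set u : ℕ → ℝ := Function.update (cpt n lam r) d (cpt n lam r d + δ) with hu
    have humem : u ∈ Pm n lam r (n-1) := pert_mem hn hlam hr hd hδpos.le hδle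
    have hkey : Psi n lam r u -ᵥ Psi n lam r (cpt n lam r) = δ • chi n r d := by
      rw [vsub_eq_sub, Psi_sub, Finset.sum_eq_single d]
      · rw [hu, Function.update_self, show cpt n lam r d + δ - cpt n lam r d = δ by ring]
      · intro b _ hbd
        rw [hu, Function.update_of_ne hbd, sub_self, zero_smul]
      · intro hds
        exact absurd (Finset.mem_Icc.mpr hd) hds
    have hchi : chi n r d = δ⁻¹ • (Psi n lam r u -ᵥ Psi n lam r (cpt n lam r)) := by
      rw [hkey, smul_smul, inv_mul_cancel₀ (ne_of_gt hδpos), one_smul]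
    rw [hchi]
    apply Submodule.smul_mem
    apply vsub_mem_vectorSpan
    · rw [face_eq hn hlam hr]; exact ⟨u, humem, rfl⟩
    · rw [face_eq hn hlam hr]; exact ⟨cpt n lam r, cpt_mem hn hlam hr, rfl⟩

lemma chi_linearIndependent {n : ℕ} {lam : ℕ → ℝ} {r : ℕ → ℕ} (hn : 2 ≤ n)
    (hr : ∀ j, 1 ≤ j → j ≤ n - 1 → 1 ≤ r j ∧ r j ≤ n - j) :
    LinearIndependent ℝ (fun d : ↥((Finset.Icc 1 (n-1) : Finset ℕ) : Set ℕ) => chi n r (d : ℕ)) := by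
  rw [Fintype.linearIndependent_iff]
  intro gg hgg i
  obtain ⟨d, hdmem⟩ := i
  have hd : 1 ≤ d ∧ d ≤ n - 1 := Finset.mem_Icc.mp hdmem
  have hrd := hr d hd.1 hd.2
  set pd := posd n r d hrd.1 hd.1 (by omega) with hpd
  have h := congrFun hgg pd
  rw [Finset.sum_apply] at h
  simp only [Pi.smul_apply, smul_eq_mul] at h
  have hterm : ∀ b ∈ (Finset.univ : Finset ↥((Finset.Icc 1 (n-1) : Finset ℕ) : Set ℕ)),
      b ≠ ⟨d, hdmem⟩ → gg b * chi n r (b : ℕ) pd = 0 := by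
    intro b _ hbne
    rw [hpd, chi_posd, if_neg (fun hc => hbne (Subtype.ext hc)), mul_zero]
  have hmain := Finset.sum_eq_single (⟨d, hdmem⟩ :
      ↥((Finset.Icc 1 (n-1) : Finset ℕ) : Set ℕ)) hterm (fun hin => absurd (Finset.mem_univ _) hin)
  rw [hmain] at h
  rw [hpd, chi_posd, if_pos rfl, mul_one] at h
  exact h

end GZdev

theorem stmt_13 (n : ℕ) (hn : 2 ≤ n) (lam : ℕ → ℝ)
    (hlam : ∀ i, 1 ≤ i → i < n → lam (i + 1) < lam i) :
    ∀ r ∈ calF n,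
      (Fface n lam r).Nonempty ∧
      IsCompact (Fface n lam r) ∧
      Convex ℝ (Fface n lam r) ∧
      Module.finrank ℝ (affineSpan ℝ (Fface n lam r)).direction = n - 1 ∧
      (Set.extremePoints ℝ (Fface n lam r)).ncard = 2 ^ (n - 1) := by
  intro r hrF
  obtain ⟨hr, _⟩ := hrF
  refine ⟨?_, ?_, ?_, ?_, ?_⟩
  · -- nonempty
    refine ⟨GZdev.Psi n lam r (GZdev.cpt n lam r), ?_⟩
    rw [GZdev.face_eq hn hlam hr]
    exact ⟨_, GZdev.cpt_mem hn hlam hr, rfl⟩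
  · -- compact
    exact IsCompact.of_isClosed_subset
      (isCompact_univ_pi fun _ => isCompact_Icc)
      (GZdev.fface_closed lam r)
      (GZdev.fface_subset_box hn hlam hr)
  · -- convex
    rw [GZdev.face_eq hn hlam hr]
    intro x hx y hy a b ha hb hab
    obtain ⟨t, ht, rfl⟩ := hx
    obtain ⟨t', ht', rfl⟩ := hy
    exact ⟨a • t + b • t', GZdev.Pm_convex ht ht' ha hb hab,
      GZdev.Psi_affine lam r t t' hab⟩
  · -- dimension
    rw [direction_affineSpan, GZdev.fface_vectorSpan hn hlam hr,
      ← Finset.coe_Icc, Set.image_eq_range]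
    rw [finrank_span_eq_card (GZdev.chi_linearIndependent (lam := lam) hn hr)]
    rw [← Nat.card_eq_fintype_card, Nat.card_coe_set_eq, Set.ncard_coe_finset, Nat.card_Icc]
    omega
  · -- extreme points
    obtain ⟨V, hVsub, hVext, hVcard⟩ := GZdev.ext_finset hn hlam hr (n-1) le_rfl
    rw [GZdev.face_eq hn hlam hr,
      GZdev.extremePoints_Psi_image GZdev.Pm_convex (GZdev.Psi_injOn hr), hVext,
      Set.ncard_image_of_injOn ((GZdev.Psi_injOn hr).mono hVsub), Set.ncard_coe_finset, hVcard]
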